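/- Under the hypotheses of the connection formula P_n = S_n + a_n S_{n-1} with a_n = (n−1)λ h_n/(z h̃_{n-1}) and structure relation ΔP_n = nP_{n-1} + ξ_n P_{n-2} (ξ_n = γ_n γ_{n-1}/z), the Sobolev norms satisfy the nonlinear recurrence h̃_n = λn²h_{n-1} + (1 + λγ_n γ_{n-1}/z²)h_n − (n−1)²(λ²/z²)·h_n²/h̃_{n-1} for n ≥ 2. -/

import Mathlib

open Polynomial

/-- The forward difference operator on polynomials: `Δp = p(x+1) - p(x)`. -/
noncomputable def fdiff (p : Polynomial ℝ) : Polynomial ℝ := p.comp (X + 1) - p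

lemma fdiff_add (p q : Polynomial ℝ) : fdiff (p + q) = fdiff p + fdiff q := by
  simp [fdiff, add_comp]; ring

lemma fdiff_sub (p q : Polynomial ℝ) : fdiff (p - q) = fdiff p - fdiff q := by
  simp [fdiff, sub_comp]; ring

lemma fdiff_C_mul (c : ℝ) (p : Polynomial ℝ) : fdiff (C c * p) = C c * fdiff p := by
  simp [fdiff, mul_comp, mul_sub]

lemma fdiff_zero : fdiff (0 : Polynomial ℝ) = 0 := by simp [fdiff]

lemma fdiff_degree_lt (p : Polynomial ℝ) (hp : p ≠ 0) : (fdiff p).degree < p.degree := by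
  have hC1 : ((X:Polynomial ℝ) + 1) = X + C 1 := by simp
  have hX1 : ((X:Polynomial ℝ) + 1).natDegree = 1 := by rw [hC1]; exact natDegree_X_add_C 1
  have hlcX : ((X:Polynomial ℝ) + 1).leadingCoeff = 1 := by rw [hC1]; exact leadingCoeff_X_add_C 1
  have hlc : (p.comp (X + 1)).leadingCoeff = p.leadingCoeff := by
    rw [leadingCoeff_comp (by rw [hX1]; omega), hlcX, one_pow, mul_one]
  have hc0 : p.comp (X + 1) ≠ 0 := fun hcon => hp (by
    have := hlc.symm
    rw [hcon, leadingCoeff_zero] at this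
    exact leadingCoeff_eq_zero.1 this.symm.symm)
  have h1 : (p.comp (X + 1)).degree = p.degree := by
    rw [degree_eq_natDegree hc0, degree_eq_natDegree hp, natDegree_comp, hX1, mul_one]
  have := degree_sub_lt h1 hc0 hlc
  rwa [h1] at this

lemma degree_lt_of_coeff' (q : Polynomial ℝ) (m : ℕ) (h1 : q.degree ≤ (m:ℕ)) (h2 : q.coeff m = 0) :
    q.degree < (m:ℕ) := by
  rw [degree_lt_iff_coeff_zero]
  intro j hj
  rcases eq_or_lt_of_le hj with rfl | hj'
  · exact h2
  · exact coeff_eq_zero_of_degree_lt (lt_of_le_of_lt h1 (by exact_mod_cast hj'))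

lemma deg_le_of_lt_succ' (q : Polynomial ℝ) (m : ℕ) (h1 : q.degree < ((m+1:ℕ) : WithBot ℕ)) :
    q.degree ≤ (m : ℕ) := by
  rcases eq_or_ne q 0 with rfl | h0
  · simp
  · calc q.degree ≤ (q.natDegree : WithBot ℕ) := degree_le_natDegree
      _ ≤ (m : ℕ) := by
        exact_mod_cast Nat.lt_succ_iff.1 ((natDegree_lt_iff_degree_lt h0).2 h1)

lemma fdiff_coeff_top (p : Polynomial ℝ) (m : ℕ) (hm : p.Monic) (hd : p.natDegree = m + 1) :
    (fdiff p).coeff m = (m + 1 : ℝ) := by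
  have hdeg : p.degree = ((m+1 : ℕ) : WithBot ℕ) := by rw [degree_eq_natDegree hm.ne_zero, hd]
  set r := p - X ^ (m+1) with hr
  have hrd : r.degree < ((m+1:ℕ) : WithBot ℕ) := by
    apply degree_lt_of_coeff' _ _ ?_ ?_
    · apply le_trans (degree_sub_le _ _); simp [hdeg, degree_X_pow]
    · simp [hr, coeff_X_pow, ← hd, hm.coeff_natDegree]
  have hp : p = X ^ (m+1) + r := by rw [hr]; ring
  rw [hp, fdiff_add]
  have h2 : (fdiff (X ^ (m+1) : Polynomial ℝ)).coeff m = (m+1 : ℝ) := by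
    simp only [fdiff, X_pow_comp, coeff_sub, coeff_X_pow, if_neg (by omega : ¬ m = m + 1)]
    rw [coeff_X_add_one_pow]
    rw [Nat.choose_symm (by omega : m ≤ m + 1) |>.symm]
    simp [Nat.succ_sub (le_refl m)]
  have h3 : (fdiff r).coeff m = 0 := by
    rcases eq_or_ne r 0 with h0 | hr0
    · rw [h0, fdiff_zero]; simp
    · exact coeff_eq_zero_of_degree_lt
        (lt_of_lt_of_le (fdiff_degree_lt r hr0) (deg_le_of_lt_succ' r m hrd))
  simp [coeff_add, h2, h3]

lemma ortho_kill (B : Polynomial ℝ → ℝ)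
    (hadd : ∀ p q, B (p + q) = B p + B q)
    (hCmul : ∀ c p, B (Polynomial.C c * p) = c * B p)
    (Q : ℕ → Polynomial ℝ) (hQm : ∀ k, (Q k).Monic) (hQd : ∀ k, (Q k).natDegree = k)
    (n : ℕ) (hQ0 : ∀ k, k < n → B (Q k) = 0) :
    ∀ q : Polynomial ℝ, q.degree < (n : ℕ) → B q = 0 := by
  have hB0 : B 0 = 0 := by
    have := hCmul 0 0
    simpa using this
  suffices H : ∀ d, d ≤ n → ∀ q : Polynomial ℝ, q.degree < (d : ℕ) → B q = 0 by
    exact fun q hq => H n le_rfl q hq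
  intro d
  induction d with
  | zero =>
    intro _ q hq
    have : q = 0 := by
      ext j
      simpa using (degree_lt_iff_coeff_zero q 0).1 (by exact_mod_cast hq) j (Nat.zero_le j)
    rw [this, hB0]
  | succ d ih =>
    intro hdn q hq
    set c := q.coeff d with hc
    set r := q - Polynomial.C c * Q d with hrdef
    have hQdeg : (Q d).degree = (d : ℕ) := by
      rw [degree_eq_natDegree (hQm d).ne_zero, hQd d]
    have hcoef : (Q d).coeff d = 1 := by
      have := (hQm d).coeff_natDegree
      rwa [hQd d] at this
    have hrd : r.degree < (d : ℕ) := by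
      apply degree_lt_of_coeff' _ _ ?_ ?_
      · apply le_trans (degree_sub_le _ _)
        apply max_le (deg_le_of_lt_succ' q d hq)
        apply le_trans (degree_mul_le _ _)
        rw [hQdeg]
        exact le_trans (add_le_add_left degree_C_le _) (by simp)
      · simp [hrdef, coeff_C_mul, hcoef, hc]
    have hq' : q = Polynomial.C c * Q d + r := by rw [hrdef]; ring
    rw [hq', hadd, hCmul, hQ0 d (by omega), ih (by omega) r hrd]
    ring

lemma ortho_top (B : Polynomial ℝ → ℝ)
    (hadd : ∀ p q, B (p + q) = B p + B q)
    (hCmul : ∀ c p, B (Polynomial.C c * p) = c * B p)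
    (Q : ℕ → Polynomial ℝ) (hQm : ∀ k, (Q k).Monic) (hQd : ∀ k, (Q k).natDegree = k)
    (n : ℕ) (hQ0 : ∀ k, k < n → B (Q k) = 0) (v : ℝ) (hv : B (Q n) = v) :
    ∀ q : Polynomial ℝ, q.degree ≤ (n : ℕ) → B q = q.coeff n * v := by
  intro q hq
  set c := q.coeff n with hc
  set r := q - Polynomial.C c * Q n with hrdef
  have hQdeg : (Q n).degree = (n : ℕ) := by
    rw [degree_eq_natDegree (hQm n).ne_zero, hQd n]
  have hcoef : (Q n).coeff n = 1 := by
    have := (hQm n).coeff_natDegree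
    rwa [hQd n] at this
  have hrd : r.degree < (n : ℕ) := by
    apply degree_lt_of_coeff' _ _ ?_ ?_
    · apply le_trans (degree_sub_le _ _)
      apply max_le hq
      apply le_trans (degree_mul_le _ _)
      rw [hQdeg]
      exact le_trans (add_le_add_left degree_C_le _) (by simp)
    · simp [hrdef, coeff_C_mul, hcoef, hc]
  have hq' : q = Polynomial.C c * Q n + r := by rw [hrdef]; ring
  rw [hq', hadd, hCmul, hv, ortho_kill B hadd hCmul Q hQm hQd n hQ0 r hrd]
  ring

theorem sobolev_norm_recurrence (L : Polynomial ℝ →ₗ[ℝ] ℝ) (z lam : ℝ)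
    (hz : 0 < z) (hlam : 0 < lam)
    (P S : ℕ → Polynomial ℝ)
    (hPmonic : ∀ n, (P n).Monic) (hPdeg : ∀ n, (P n).natDegree = n)
    (hSmonic : ∀ n, (S n).Monic) (hSdeg : ∀ n, (S n).natDegree = n)
    (h htil : ℕ → ℝ) (hne : ∀ n, h n ≠ 0) (htilne : ∀ n, htil n ≠ 0)
    (hPortho : ∀ k n, L (P k * P n) = if k = n then h n else 0)
    (ip : Polynomial ℝ → Polynomial ℝ → ℝ)
    (hip : ∀ p q, ip p q = L (p * q) + lam * L (fdiff p * fdiff q))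
    (hSortho : ∀ k n, ip (S k) (S n) = if k = n then htil n else 0)
    (γ ξ : ℕ → ℝ)
    (hγ : ∀ n, 1 ≤ n → γ n = h n / h (n - 1))
    (hstruct : ∀ n, 2 ≤ n →
      fdiff (P n) = C (n : ℝ) * P (n - 1) + C (ξ n) * P (n - 2))
    (hξ : ∀ n, 2 ≤ n → ξ n = γ n * γ (n - 1) / z) :
    ∀ n, 2 ≤ n →
      htil n = lam * (n : ℝ) ^ 2 * h (n - 1) +
        (1 + lam * γ n * γ (n - 1) / z ^ 2) * h n -
        ((n : ℝ) - 1) ^ 2 * (lam ^ 2 / z ^ 2) * (h n) ^ 2 / htil (n - 1) := by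
  intro n hn
  obtain ⟨k, rfl⟩ : ∃ k, n = k + 2 := ⟨n - 2, by omega⟩
  -- basic degree facts
  have hdegP : ∀ m, (P m).degree = (m : ℕ) := fun m => by
    rw [degree_eq_natDegree (hPmonic m).ne_zero, hPdeg m]
  have hdegS : ∀ m, (S m).degree = (m : ℕ) := fun m => by
    rw [degree_eq_natDegree (hSmonic m).ne_zero, hSdeg m]
  -- kill/top lemmas for L against P
  have kill1 : ∀ m, ∀ q : Polynomial ℝ, q.degree < (m : ℕ) → L (q * P m) = 0 := by
    intro m
    apply ortho_kill (fun q => L (q * P m)) ?_ ?_ P hPmonic hPdeg m ?_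
    · intro p q; show L ((p + q) * P m) = L (p * P m) + L (q * P m)
      rw [add_mul, map_add]
    · intro c p; show L (C c * p * P m) = c * L (p * P m)
      rw [mul_assoc, ← smul_eq_C_mul, map_smul, smul_eq_mul]
    · intro j hj; show L (P j * P m) = 0
      rw [hPortho]; simp [Nat.ne_of_lt hj]
  have top1 : ∀ m, ∀ q : Polynomial ℝ, q.degree ≤ (m : ℕ) →
      L (q * P m) = q.coeff m * h m := by
    intro m
    apply ortho_top (fun q => L (q * P m)) ?_ ?_ P hPmonic hPdeg m ?_ (h m) ?_
    · intro p q; show L ((p + q) * P m) = L (p * P m) + L (q * P m)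
      rw [add_mul, map_add]
    · intro c p; show L (C c * p * P m) = c * L (p * P m)
      rw [mul_assoc, ← smul_eq_C_mul, map_smul, smul_eq_mul]
    · intro j hj; show L (P j * P m) = 0
      rw [hPortho]; simp [Nat.ne_of_lt hj]
    · show L (P m * P m) = h m
      rw [hPortho]; simp
  -- bilinearity of ip
  have ipadd2 : ∀ p q r : Polynomial ℝ, ip p (q + r) = ip p q + ip p r := by
    intro p q r
    rw [hip, hip, hip, fdiff_add, mul_add, mul_add, map_add, map_add]
    ring
  have ipCmul2 : ∀ (c : ℝ) (p q : Polynomial ℝ), ip p (C c * q) = c * ip p q := by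
    intro c p q
    rw [hip, hip, fdiff_C_mul, mul_left_comm p, mul_left_comm (fdiff p),
      ← smul_eq_C_mul, ← smul_eq_C_mul, map_smul, map_smul, smul_eq_mul, smul_eq_mul]
    ring
  have ipsub2 : ∀ p q r : Polynomial ℝ, ip p (q - r) = ip p q - ip p r := by
    intro p q r
    have := ipadd2 p (q - r) r
    rw [sub_add_cancel] at this
    linarith
  have ipsymm : ∀ p q, ip p q = ip q p := by
    intro p q; rw [hip, hip, mul_comm, mul_comm (fdiff p)]
  -- kill/top lemmas for ip against S
  have kill2 : ∀ m, ∀ q : Polynomial ℝ, q.degree < (m : ℕ) → ip (S m) q = 0 := by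
    intro m
    apply ortho_kill (fun q => ip (S m) q) (ipadd2 (S m)) (fun c p => ipCmul2 c (S m) p)
      S hSmonic hSdeg m ?_
    intro j hj
    show ip (S m) (S j) = 0
    rw [hSortho]; simp [(Nat.ne_of_lt hj).symm]
  have top2 : ∀ m, ∀ q : Polynomial ℝ, q.degree ≤ (m : ℕ) →
      ip (S m) q = q.coeff m * htil m := by
    intro m
    apply ortho_top (fun q => ip (S m) q) (ipadd2 (S m)) (fun c p => ipCmul2 c (S m) p)
      S hSmonic hSdeg m ?_ (htil m) ?_
    · intro j hj
      show ip (S m) (S j) = 0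
      rw [hSortho]; simp [(Nat.ne_of_lt hj).symm]
    · show ip (S m) (S m) = htil m
      rw [hSortho]; simp
  -- structure relation
  set a : ℝ := ((k + 2 : ℕ) : ℝ) with ha
  set b : ℝ := ξ (k + 2) with hb
  have hΔ : fdiff (P (k + 2)) = C a * P (k + 1) + C b * P k :=
    hstruct (k + 2) (by omega)
  -- ip (P (k+2)) q = 0 for degree q < k+1
  have killip : ∀ q : Polynomial ℝ, q.degree < ((k + 1 : ℕ) : WithBot ℕ) →
      ip (P (k + 2)) q = 0 := by
    intro q hq
    rcases eq_or_ne q 0 with rfl | hq0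
    · rw [hip]; simp [fdiff_zero]
    have hql : q.degree ≤ (k : ℕ) := deg_le_of_lt_succ' q k hq
    have h1 : L (P (k + 2) * q) = 0 := by
      rw [mul_comm]
      exact kill1 (k + 2) q (lt_of_le_of_lt hql (by exact_mod_cast (by omega : k < k + 2)))
    have hΔq : (fdiff q).degree < ((k : ℕ) : WithBot ℕ) :=
      lt_of_lt_of_le (fdiff_degree_lt q hq0) hql
    have e1 : L (fdiff q * P (k + 1)) = 0 :=
      kill1 (k + 1) _ (lt_trans hΔq (by exact_mod_cast (by omega : k < k + 1)))
    have e2 : L (fdiff q * P k) = 0 := kill1 k _ hΔq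
    have h2 : L (fdiff (P (k + 2)) * fdiff q) = 0 := by
      have : fdiff (P (k + 2)) * fdiff q
          = a • (fdiff q * P (k + 1)) + b • (fdiff q * P k) := by
        rw [hΔ, smul_eq_C_mul, smul_eq_C_mul]; ring
      rw [this, map_add, map_smul, map_smul, smul_eq_mul, smul_eq_mul, e1, e2]
      ring
    rw [hip, h1, h2]; ring
  -- Step A
  have hd : (P (k + 2) - S (k + 2)).degree < ((k + 2 : ℕ) : WithBot ℕ) := by
    have := degree_sub_lt ((hdegP (k + 2)).trans (hdegS (k + 2)).symm) (hPmonic (k + 2)).ne_zero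
      ((hPmonic (k + 2)).leadingCoeff.trans (hSmonic (k + 2)).leadingCoeff.symm)
    rwa [hdegP] at this
  have hA : ip (S (k + 2)) (P (k + 2)) = htil (k + 2) := by
    have e : P (k + 2) = S (k + 2) + (P (k + 2) - S (k + 2)) := by ring
    rw [e, ipadd2, hSortho, if_pos rfl, kill2 (k + 2) _ hd, add_zero]
  -- Step B
  have hB : ip (S (k + 1)) (P (k + 2)) = lam * (b * (((k + 1 : ℕ) : ℝ) * h k)) := by
    rw [hip]
    have h1 : L (S (k + 1) * P (k + 2)) = 0 := by
      apply kill1 (k + 2)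
      rw [hdegS]
      exact_mod_cast (by omega : k + 1 < k + 2)
    have hΔS : (fdiff (S (k + 1))).degree < ((k + 1 : ℕ) : WithBot ℕ) := by
      rw [← hdegS (k + 1)]
      exact fdiff_degree_lt _ (hSmonic (k + 1)).ne_zero
    have e1 : L (fdiff (S (k + 1)) * P (k + 1)) = 0 := kill1 (k + 1) _ hΔS
    have e2 : L (fdiff (S (k + 1)) * P k) = ((k + 1 : ℕ) : ℝ) * h k := by
      rw [top1 k _ (deg_le_of_lt_succ' _ k hΔS),
        fdiff_coeff_top (S (k + 1)) k (hSmonic (k + 1)) (hSdeg (k + 1))]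
      push_cast; ring
    have h2 : L (fdiff (S (k + 1)) * fdiff (P (k + 2)))
        = a * 0 + b * (((k + 1 : ℕ) : ℝ) * h k) := by
      have : fdiff (S (k + 1)) * fdiff (P (k + 2))
          = a • (fdiff (S (k + 1)) * P (k + 1)) + b • (fdiff (S (k + 1)) * P k) := by
        rw [hΔ, smul_eq_C_mul, smul_eq_C_mul]; ring
      rw [this, map_add, map_smul, map_smul, smul_eq_mul, smul_eq_mul, e1, e2]
    rw [h1, h2]; ring
  -- the connection coefficient
  set c : ℝ := (P (k + 2) - S (k + 2)).coeff (k + 1) with hcdef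
  have hdle : (P (k + 2) - S (k + 2)).degree ≤ ((k + 1 : ℕ) : WithBot ℕ) :=
    deg_le_of_lt_succ' _ (k + 1) hd
  have hcval : c * htil (k + 1) = lam * (b * (((k + 1 : ℕ) : ℝ) * h k)) := by
    have e1 : ip (S (k + 1)) (P (k + 2) - S (k + 2)) = c * htil (k + 1) :=
      top2 (k + 1) _ hdle
    have e2 : ip (S (k + 1)) (P (k + 2) - S (k + 2))
        = ip (S (k + 1)) (P (k + 2)) - ip (S (k + 1)) (S (k + 2)) := ipsub2 _ _ _
    rw [e1, hB, hSortho, if_neg (by omega)] at e2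
    linarith
  -- value of ip (P n) (P n)
  have hPP : ip (P (k + 2)) (P (k + 2))
      = h (k + 2) + lam * (a ^ 2 * h (k + 1) + b ^ 2 * h k) := by
    rw [hip, hPortho, if_pos rfl, hΔ]
    have expand : (C a * P (k + 1) + C b * P k) * (C a * P (k + 1) + C b * P k)
        = (a * a) • (P (k + 1) * P (k + 1)) + (a * b) • (P (k + 1) * P k)
          + (b * a) • (P k * P (k + 1)) + (b * b) • (P k * P k) := by
      simp only [smul_eq_C_mul, C_mul]; ring
    rw [expand, map_add, map_add, map_add, map_smul, map_smul, map_smul, map_smul,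
      hPortho, hPortho, hPortho, hPortho, if_pos rfl, if_pos rfl,
      if_neg (by omega : ¬ k + 1 = k), if_neg (by omega : ¬ k = k + 1)]
    simp only [smul_eq_mul]
    ring
  -- decomposition of ip (P n) (P n)
  have hdecomp : ip (P (k + 2)) (P (k + 2))
      = htil (k + 2) + c * (lam * (b * (((k + 1 : ℕ) : ℝ) * h k))) := by
    set r : Polynomial ℝ := (P (k + 2) - S (k + 2)) - C c * S (k + 1) with hrdef
    have hScoef : (S (k + 1)).coeff (k + 1) = 1 := by
      have := (hSmonic (k + 1)).coeff_natDegree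
      rwa [hSdeg (k + 1)] at this
    have hrd : r.degree < ((k + 1 : ℕ) : WithBot ℕ) := by
      apply degree_lt_of_coeff' _ _ ?_ ?_
      · apply le_trans (degree_sub_le _ _)
        apply max_le hdle
        apply le_trans (degree_mul_le _ _)
        rw [hdegS]
        exact le_trans (add_le_add_left degree_C_le _) (by simp)
      · rw [hrdef, coeff_sub, coeff_C_mul, hScoef, mul_one, ← hcdef, sub_self]
    have e : P (k + 2) = S (k + 2) + (C c * S (k + 1) + r) := by rw [hrdef]; ring
    calc ip (P (k + 2)) (P (k + 2))
        = ip (P (k + 2)) (S (k + 2)) + (c * ip (P (k + 2)) (S (k + 1)) + ip (P (k + 2)) r) := by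
          nth_rewrite 2 [e]
          rw [ipadd2, ipadd2, ipCmul2]
      _ = htil (k + 2) + c * (lam * (b * (((k + 1 : ℕ) : ℝ) * h k))) := by
          rw [ipsymm (P (k + 2)) (S (k + 2)), hA, ipsymm (P (k + 2)) (S (k + 1)), hB,
            killip r hrd, add_zero]
  -- put it together
  have hmain : htil (k + 2)
      = h (k + 2) + lam * (a ^ 2 * h (k + 1) + b ^ 2 * h k)
        - (lam * (b * (((k + 1 : ℕ) : ℝ) * h k))) ^ 2 / htil (k + 1) := by
    have hct : c = lam * (b * (((k + 1 : ℕ) : ℝ) * h k)) / htil (k + 1) :=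
      (eq_div_iff (htilne (k + 1))).2 hcval
    rw [hct, hPP] at hdecomp
    have e : lam * (b * (((k + 1 : ℕ) : ℝ) * h k)) / htil (k + 1)
          * (lam * (b * (((k + 1 : ℕ) : ℝ) * h k)))
        = (lam * (b * (((k + 1 : ℕ) : ℝ) * h k))) ^ 2 / htil (k + 1) := by ring
    rw [e] at hdecomp
    linarith
  -- final algebra
  have hγ2 : γ (k + 2) = h (k + 2) / h (k + 1) := by
    have := hγ (k + 2) (by omega); simpa using this
  have hγ1 : γ (k + 1) = h (k + 1) / h k := by
    have := hγ (k + 1) (by omega); simpa using this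
  have hbval : b = γ (k + 2) * γ (k + 1) / z := by
    have := hξ (k + 2) (by omega); simpa [hb] using this
  have hz' : z ≠ 0 := ne_of_gt hz
  have hbval' : b = h (k + 2) / (h k * z) := by
    rw [hbval, hγ2, hγ1]
    field_simp [hne k, hne (k + 1), hz']
  have idx1 : k + 2 - 1 = k + 1 := rfl
  rw [idx1]
  rw [hmain, hbval', hγ2, hγ1, ha]
  have hT : ((k + 2 : ℕ) : ℝ) - 1 = ((k + 1 : ℕ) : ℝ) := by push_cast; ring
  rw [hT]
  field_simp [hne k, hne (k + 1), hne (k + 2), htilne (k + 1), hz']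
  ring
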